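/- Let c > 1/2 and δ > 0 be fixed. Let ℓ ≥ 3 and let ℓ_1, ℓ_2, ℓ_3 be positive integers with ℓ_1+ℓ_2+ℓ_3 = ℓ. Then there exist constants C > 0 and ρ ∈ (0,1), depending only on ℓ, c and δ, such that for all n ≥ 1, all vectors y_1,…,y_{ℓ−2} ∈ ℝ^n, and all signs ε_1,…,ε_{ℓ−2} ∈ {1,−1}: V_n^{−2ℓc} ∫_{ℝ^n}∫_{ℝ^n} f(x_1)·( ∏_{i=1}^{ℓ_1−1} f(ε_i x_1 + y_i) )·f(x_2)·( ∏_{i=ℓ_1}^{ℓ_1+ℓ_2−2} f(ε_i x_2 + y_i) )·( ∏_{i=ℓ_1+ℓ_2−1}^{ℓ−2} f(ε_i(x_1+x_2) + y_i) ) dx_1 dx_2 ≤ C·ρ^n, where f = f_{c,δ}. -/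

import Mathlib

open MeasureTheory
open Metric
open scoped ENNReal

/-- `V_n = π^{n/2} / Γ(n/2 + 1)`, the volume of the unit ball in `ℝⁿ`. -/
noncomputable def unitBallVol (n : ℕ) : ℝ :=
  Real.pi ^ ((n : ℝ) / 2) / Real.Gamma ((n : ℝ) / 2 + 1)

/-- `R_n(δ) = (δ / V_n)^{1/n}`, the radius of a ball of volume `δ` in `ℝⁿ`. -/
noncomputable def cutRadius (n : ℕ) (δ : ℝ) : ℝ :=
  (δ / unitBallVol n) ^ (1 / (n : ℝ))

/-- `f_{c,δ}(x) = |x|^{-2cn}` if `|x| > R_n(δ)`, and `0` otherwise. -/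
noncomputable def truncPower (n : ℕ) (c δ : ℝ) (x : EuclideanSpace ℝ (Fin n)) : ℝ :=
  if cutRadius n δ < ‖x‖ then ‖x‖ ^ (-(2 * c * (n : ℝ))) else 0

namespace Stmt11


lemma unitBallVol_pos (n : ℕ) : 0 < unitBallVol n := by
  have h1 : 0 < Real.pi ^ ((n : ℝ) / 2) := Real.rpow_pos_of_pos Real.pi_pos _
  have h2 : 0 < Real.Gamma ((n : ℝ) / 2 + 1) := Real.Gamma_pos_of_pos (by positivity)
  exact div_pos h1 h2

lemma cutRadius_pos {n : ℕ} {δ : ℝ} (hδ : 0 < δ) : 0 < cutRadius n δ :=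
  Real.rpow_pos_of_pos (div_pos hδ (unitBallVol_pos n)) _

lemma truncPower_nonneg (n : ℕ) (c δ : ℝ) (x : EuclideanSpace ℝ (Fin n)) :
    0 ≤ truncPower n c δ x := by
  unfold truncPower; split
  · exact Real.rpow_nonneg (norm_nonneg _) _
  · exact le_refl 0

lemma measurable_truncPower (n : ℕ) (c δ : ℝ) : Measurable (truncPower n c δ) := by
  unfold truncPower
  apply Measurable.ite
  · exact (isOpen_lt continuous_const continuous_norm).measurableSet
  · fun_prop
  · fun_prop

lemma truncPower_congr {n : ℕ} (c δ : ℝ) {u v : EuclideanSpace ℝ (Fin n)}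
    (h : ‖u‖ = ‖v‖) : truncPower n c δ u = truncPower n c δ v := by
  unfold truncPower; rw [h]

lemma volume_unitBall {n : ℕ} (hn : 1 ≤ n) :
    volume (ball (0 : EuclideanSpace ℝ (Fin n)) 1) = ENNReal.ofReal (unitBallVol n) := by
  have : Nonempty (Fin n) := ⟨⟨0, hn⟩⟩
  rw [EuclideanSpace.volume_ball]
  simp only [Fintype.card_fin]
  rw [ENNReal.ofReal_one, one_pow, one_mul]
  congr 1
  unfold unitBallVol
  congr 1
  rw [Real.sqrt_eq_rpow, ← Real.rpow_natCast (Real.pi ^ ((1:ℝ)/2)) n, ← Real.rpow_mul Real.pi_pos.le]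
  ring_nf



variable {n : ℕ}

local notation "E" => EuclideanSpace ℝ (Fin n)
local notation "V1" => volume (ball (0 : E) 1)

/-- exists a dyadic (ratio q) shell containing a given norm value -/
lemma exists_shell {q t : ℝ} (hq : 1 < q) (ht : 1 < t) :
    ∃ k : ℕ, q ^ k < t ∧ t ≤ q ^ (k + 1) := by
  have hex : ∃ m : ℕ, t ≤ q ^ m := by
    obtain ⟨m, hm⟩ := pow_unbounded_of_one_lt t hq
    exact ⟨m, hm.le⟩
  classical
  let m₀ := Nat.find hex
  have hspec : t ≤ q ^ m₀ := Nat.find_spec hex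
  have hm₀ : m₀ ≠ 0 := by
    intro h
    rw [h, pow_zero] at hspec
    linarith
  refine ⟨m₀ - 1, ?_, ?_⟩
  · have := Nat.find_min hex (m := m₀ - 1) (by omega)
    push_neg at this
    exact this
  · have : m₀ - 1 + 1 = m₀ := by omega
    rw [this]; exact hspec

noncomputable def qc (c : ℝ) : ℝ := (1 - (101 / 100 : ℝ) ^ ((1:ℝ) - 2 * c))⁻¹

lemma qc_pos {c : ℝ} (hc : 1 / 2 < c) : 0 < qc c := by
  unfold qc
  have : (101 / 100 : ℝ) ^ ((1:ℝ) - 2 * c) < 1 :=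
    Real.rpow_lt_one_of_one_lt_of_neg (by norm_num) (by linarith)
  have h2 : 0 < 1 - (101 / 100 : ℝ) ^ ((1:ℝ) - 2 * c) := by linarith
  exact inv_pos.2 h2

/-- Master radial estimate via geometric shells. -/
lemma master (hn : 1 ≤ n) {c : ℝ} (hc : 1 / 2 < c) {a r₀ : ℝ}
    (ha : (n : ℝ) < a) (han : (n : ℝ) - a ≤ 1 - 2 * c) (hr : 0 < r₀) :
    ∫⁻ x : E, (if r₀ < ‖x‖ then ENNReal.ofReal (‖x‖ ^ (-a)) else 0) ≤
      ENNReal.ofReal (r₀ ^ ((n : ℝ) - a) * (101 / 100 : ℝ) ^ n * qc c) * V1 := by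
  unfold qc
  set q : ℝ := 101 / 100 with hqdef
  have hq : 1 < q := by norm_num [hqdef]
  have hq0 : (0 : ℝ) < q := by linarith
  have ha0 : 0 < a := lt_of_le_of_lt (by positivity) ha
  -- the shell functions
  set g : ℕ → E → ℝ≥0∞ := fun k =>
    (closedBall (0 : E) (r₀ * q ^ (k + 1))).indicator
      (fun _ => ENNReal.ofReal ((r₀ * q ^ k) ^ (-a))) with hgdef
  have hpt : ∀ x : E, (if r₀ < ‖x‖ then ENNReal.ofReal (‖x‖ ^ (-a)) else 0) ≤ ∑' k, g k x := by
    intro x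
    by_cases hx : r₀ < ‖x‖
    · obtain ⟨k, hk1, hk2⟩ := exists_shell hq (show 1 < ‖x‖ / r₀ from (one_lt_div hr).2 hx)
      have hk1' : r₀ * q ^ k < ‖x‖ := by
        rw [div_le_iff₀ hr] at hk2
        rw [lt_div_iff₀ hr] at hk1
        linarith
      have hk2' : ‖x‖ ≤ r₀ * q ^ (k + 1) := by
        rw [div_le_iff₀ hr] at hk2
        linarith
      have hmem : x ∈ closedBall (0 : E) (r₀ * q ^ (k + 1)) := by
        simpa [dist_eq_norm] using hk2'
      have : (if r₀ < ‖x‖ then ENNReal.ofReal (‖x‖ ^ (-a)) else 0) ≤ g k x := by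
        rw [if_pos hx, hgdef]
        simp only [Set.indicator_of_mem hmem]
        exact ENNReal.ofReal_le_ofReal
          (Real.rpow_le_rpow_of_nonpos (by positivity) hk1'.le (by linarith))
      exact this.trans (ENNReal.le_tsum k)
    · rw [if_neg hx]; exact zero_le
  have hmeas : ∀ k, AEMeasurable (g k) volume := fun k =>
    (measurable_const.indicator measurableSet_closedBall).aemeasurable
  calc ∫⁻ x : E, (if r₀ < ‖x‖ then ENNReal.ofReal (‖x‖ ^ (-a)) else 0)
      ≤ ∫⁻ x : E, ∑' k, g k x := lintegral_mono hpt
    _ = ∑' k, ∫⁻ x : E, g k x := lintegral_tsum hmeas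
    _ ≤ ENNReal.ofReal (r₀ ^ ((n : ℝ) - a) * q ^ n *
        (1 - q ^ ((1 : ℝ) - 2 * c))⁻¹) * V1 := ?_
  -- evaluate each shell integral
  have hvol : ∀ k : ℕ, volume (closedBall (0 : E) (r₀ * q ^ (k + 1))) =
      ENNReal.ofReal ((r₀ * q ^ (k + 1)) ^ n) * V1 := by
    intro k
    rw [Measure.addHaar_closedBall volume 0 (by positivity)]
    congr 2
    simp [finrank_euclideanSpace_fin]
  have hterm : ∀ k : ℕ, ∫⁻ x : E, g k x =
      ENNReal.ofReal ((r₀ ^ ((n : ℝ) - a) * q ^ n) * (q ^ ((n : ℝ) - a)) ^ k) * V1 := by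
    intro k
    rw [hgdef]
    simp only
    rw [lintegral_indicator measurableSet_closedBall, setLIntegral_const, hvol k,
      ← mul_assoc, ← ENNReal.ofReal_mul (by positivity)]
    congr 2
    -- real identity
    have e1 : (r₀ * q ^ k) ^ (-a) = r₀ ^ (-a) * q ^ ((k : ℝ) * (-a)) := by
      rw [Real.mul_rpow hr.le (by positivity), ← Real.rpow_natCast q k,
        ← Real.rpow_mul hq0.le]
    have e2 : (r₀ * q ^ (k + 1)) ^ n = r₀ ^ (n : ℝ) * q ^ (((k : ℝ) + 1) * n) := by
      rw [mul_pow, ← Real.rpow_natCast r₀ n, ← Real.rpow_natCast (q ^ (k+1)) n,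
        ← Real.rpow_natCast q (k+1), ← Real.rpow_mul hq0.le]
      push_cast
      ring_nf
    have e3 : (q ^ ((n : ℝ) - a)) ^ k = q ^ (((n : ℝ) - a) * k) := by
      rw [← Real.rpow_natCast (q ^ ((n:ℝ) - a)) k, ← Real.rpow_mul hq0.le]
    rw [e1, e2, e3, ← Real.rpow_natCast q n]
    rw [show r₀ ^ (-a) * q ^ ((k : ℝ) * (-a)) * (r₀ ^ (n:ℝ) * q ^ (((k:ℝ) + 1) * n)) =
      (r₀ ^ (-a) * r₀ ^ (n:ℝ)) * (q ^ ((k:ℝ) * (-a)) * q ^ (((k:ℝ)+1) * n)) by ring]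
    rw [← Real.rpow_add hr, ← Real.rpow_add hq0,
      show r₀ ^ ((n:ℝ) - a) * q ^ (n:ℝ) * q ^ (((n:ℝ) - a) * k) =
        r₀ ^ ((n:ℝ) - a) * (q ^ (n:ℝ) * q ^ (((n:ℝ) - a) * k)) by ring, ← Real.rpow_add hq0]
    congr 1
    · congr 1; ring
    · congr 1; ring
  rw [tsum_congr hterm]
  -- sum the geometric series
  have hB : (0:ℝ) ≤ q ^ ((n : ℝ) - a) := by positivity
  have hsum : ∑' k : ℕ, ENNReal.ofReal ((r₀ ^ ((n : ℝ) - a) * q ^ n) * (q ^ ((n : ℝ) - a)) ^ k) * V1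
      = ENNReal.ofReal (r₀ ^ ((n : ℝ) - a) * q ^ n) *
        (1 - ENNReal.ofReal (q ^ ((n : ℝ) - a)))⁻¹ * V1 := by
    rw [ENNReal.tsum_mul_right]
    congr 1
    calc ∑' k : ℕ, ENNReal.ofReal ((r₀ ^ ((n : ℝ) - a) * q ^ n) * (q ^ ((n : ℝ) - a)) ^ k)
        = ∑' k : ℕ, ENNReal.ofReal (r₀ ^ ((n : ℝ) - a) * q ^ n) *
            ENNReal.ofReal (q ^ ((n : ℝ) - a)) ^ k := by
          congr 1; funext k
          rw [ENNReal.ofReal_mul (by positivity), ENNReal.ofReal_pow hB]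
      _ = ENNReal.ofReal (r₀ ^ ((n : ℝ) - a) * q ^ n) *
            (1 - ENNReal.ofReal (q ^ ((n : ℝ) - a)))⁻¹ := by
          rw [ENNReal.tsum_mul_left, ENNReal.tsum_geometric]
  rw [hsum]
  -- bound the geometric constant
  have hB' : q ^ ((n : ℝ) - a) ≤ q ^ ((1:ℝ) - 2 * c) :=
    Real.rpow_le_rpow_of_exponent_le hq.le han
  have hBlt : q ^ ((1:ℝ) - 2 * c) < 1 :=
    Real.rpow_lt_one_of_one_lt_of_neg hq (by linarith)
  have hinv : (1 - ENNReal.ofReal (q ^ ((n : ℝ) - a)))⁻¹ ≤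
      ENNReal.ofReal ((1 - q ^ ((1:ℝ) - 2 * c))⁻¹) := by
    rw [ENNReal.ofReal_inv_of_pos (by linarith), ← ENNReal.ofReal_one,
      ← ENNReal.ofReal_sub _ (by positivity)]
    exact ENNReal.inv_le_inv.2 (ENNReal.ofReal_le_ofReal (by linarith))
  calc ENNReal.ofReal (r₀ ^ ((n : ℝ) - a) * q ^ n) *
        (1 - ENNReal.ofReal (q ^ ((n : ℝ) - a)))⁻¹ * V1
      ≤ ENNReal.ofReal (r₀ ^ ((n : ℝ) - a) * q ^ n) *
        ENNReal.ofReal ((1 - q ^ ((1:ℝ) - 2 * c))⁻¹) * V1 := by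
        gcongr
    _ = ENNReal.ofReal (r₀ ^ ((n : ℝ) - a) * q ^ n * (1 - q ^ ((1:ℝ) - 2 * c))⁻¹) * V1 := by
        rw [← ENNReal.ofReal_mul (by positivity)]



lemma key_geom {R bb A B2 m : ℝ} (hR : 0 < R) (hA : R < A) (hB : R < B2)
    (hb : R / 2 ≤ bb) (hpar : A ^ 2 + B2 ^ 2 = 2 * m ^ 2 + bb ^ 2 / 2) :
    R ^ 2 ≤ A * B2 ∧
      (R * Real.sqrt (15 / 16) < m → R ^ 2 / (R * Real.sqrt (15 / 16)) * m ≤ A * B2) := by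
  have hs2 : Real.sqrt (15 / 16) ^ 2 = 15 / 16 := Real.sq_sqrt (by norm_num)
  have hs0 : 0 < Real.sqrt (15 / 16) := Real.sqrt_pos.2 (by norm_num)
  set s := Real.sqrt (15 / 16)
  constructor
  · nlinarith
  · intro hm
    have hm0 : 0 < m := lt_trans (by positivity) hm
    have hbb : R ^ 2 / 4 ≤ bb ^ 2 := by nlinarith
    have h1 : R ^ 2 * (2 * m ^ 2 - 7 / 8 * R ^ 2) ≤ (A * B2) ^ 2 := by
      nlinarith [mul_nonneg (sub_nonneg.2 (by nlinarith : R ^ 2 ≤ A ^ 2))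
        (sub_nonneg.2 (by nlinarith : R ^ 2 ≤ B2 ^ 2))]
    have hm2 : (R * s) ^ 2 ≤ m ^ 2 := pow_le_pow_left₀ (by positivity) hm.le 2
    have he : R ^ 2 / (R * s) = R / s := by
      field_simp
    have h2 : (R ^ 2 / (R * s) * m) ^ 2 ≤ R ^ 2 * (2 * m ^ 2 - 7 / 8 * R ^ 2) := by
      rw [he, div_mul_eq_mul_div, div_pow, hs2,
        div_le_iff₀ (by norm_num : (0:ℝ) < (15/16 : ℝ))]
      nlinarith
    have hX0 : 0 ≤ R ^ 2 / (R * s) * m := by positivity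
    have hY0 : 0 < A * B2 := by nlinarith
    nlinarith [h1, h2]

lemma norm_par {n : ℕ} (x b : EuclideanSpace ℝ (Fin n)) :
    ‖x‖ ^ 2 + ‖x + b‖ ^ 2 = 2 * ‖x + (1/2 : ℝ) • b‖ ^ 2 + ‖b‖ ^ 2 / 2 := by
  have h := parallelogram_law_with_norm ℝ (x + (1/2 : ℝ) • b) ((1/2 : ℝ) • b)
  have e1 : x + (1/2 : ℝ) • b + (1/2 : ℝ) • b = x + b := by
    rw [add_assoc, ← add_smul]
    norm_num
  have e2 : x + (1/2 : ℝ) • b - (1/2 : ℝ) • b = x := by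
    rw [add_sub_cancel_right]
  have e3 : ‖(1/2 : ℝ) • b‖ = ‖b‖ / 2 := by
    rw [norm_smul]
    simp [Real.norm_eq_abs]
    ring
  rw [e1, e2, e3] at h
  nlinarith [h]


noncomputable def phi (n : ℕ) (c δ : ℝ) (x : EuclideanSpace ℝ (Fin n)) : ℝ≥0∞ :=
  ENNReal.ofReal (truncPower n c δ x)

lemma measurable_phi (c δ : ℝ) : Measurable (phi n c δ) :=
  (measurable_truncPower n c δ).ennreal_ofReal

lemma phi_eq (c δ : ℝ) (x : E) :
    phi n c δ x = if cutRadius n δ < ‖x‖ then ENNReal.ofReal (‖x‖ ^ (-(2 * c * (n:ℝ)))) else 0 := by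
  unfold phi truncPower
  split <;> simp

lemma phi_le {c δ : ℝ} (hδ : 0 < δ) (hc : 0 < c) (x : E) :
    phi n c δ x ≤ ENNReal.ofReal (cutRadius n δ ^ (-(2 * c * (n:ℝ)))) := by
  rw [phi_eq]
  split
  · have h0 : (0:ℝ) ≤ 2 * c * (n:ℝ) := by positivity
    exact ENNReal.ofReal_le_ofReal
      (Real.rpow_le_rpow_of_nonpos (cutRadius_pos hδ) (by linarith) (by linarith))
  · exact zero_le

lemma lintegral_phi (hn : 1 ≤ n) {c δ : ℝ} (hc : 1 / 2 < c) (hδ : 0 < δ) :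
    ∫⁻ x : E, phi n c δ x ≤
      ENNReal.ofReal (cutRadius n δ ^ ((n:ℝ) - 2 * c * n) * (101 / 100 : ℝ) ^ n * qc c) * V1 := by
  have hn' : (1:ℝ) ≤ (n:ℝ) := by exact_mod_cast hn
  simp only [phi_eq]
  exact master hn hc (by nlinarith) (by nlinarith) (cutRadius_pos hδ)

lemma pair_triv (hn : 1 ≤ n) {c δ : ℝ} (hc : 1 / 2 < c) (hδ : 0 < δ) (b : E) :
    ∫⁻ x : E, phi n c δ x * phi n c δ (x + b) ≤
      ENNReal.ofReal (cutRadius n δ ^ ((n:ℝ) - 4 * c * n) * (101 / 100 : ℝ) ^ n * qc c) * V1 := by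
  have hR : 0 < cutRadius n δ := cutRadius_pos hδ
  have hc0 : (0:ℝ) < c := by linarith
  set S := ENNReal.ofReal (cutRadius n δ ^ (-(2 * c * (n:ℝ)))) with hSdef
  calc ∫⁻ x : E, phi n c δ x * phi n c δ (x + b)
      ≤ ∫⁻ x : E, phi n c δ x * S :=
        lintegral_mono fun x => mul_le_mul_right (phi_le hδ hc0 _) _
    _ = (∫⁻ x : E, phi n c δ x) * S := lintegral_mul_const' S _ ENNReal.ofReal_ne_top
    _ ≤ (ENNReal.ofReal (cutRadius n δ ^ ((n:ℝ) - 2 * c * n) * (101 / 100 : ℝ) ^ n * qc c) * V1)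
          * S := mul_le_mul_left (lintegral_phi hn hc hδ) S
    _ = ENNReal.ofReal (cutRadius n δ ^ ((n:ℝ) - 4 * c * n) * (101 / 100 : ℝ) ^ n * qc c) * V1 := by
        rw [hSdef, mul_comm _ (ENNReal.ofReal _), ← mul_assoc, ← ENNReal.ofReal_mul (by positivity)]
        congr 2
        rw [show cutRadius n δ ^ (-(2 * c * (n:ℝ))) *
            (cutRadius n δ ^ ((n:ℝ) - 2 * c * n) * (101 / 100 : ℝ) ^ n * qc c) =
            (cutRadius n δ ^ (-(2 * c * (n:ℝ))) * cutRadius n δ ^ ((n:ℝ) - 2 * c * n)) *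
            (101 / 100 : ℝ) ^ n * qc c by ring, ← Real.rpow_add hR]
        congr 2
        ring

lemma pair_good (hn : 1 ≤ n) {c δ : ℝ} (hc : 1 / 2 < c) (hδ : 0 < δ) {b : E}
    (hb : cutRadius n δ / 2 ≤ ‖b‖) :
    ∫⁻ x : E, phi n c δ x * phi n c δ (x + b) ≤
      ENNReal.ofReal (cutRadius n δ ^ ((n:ℝ) - 4 * c * n) * Real.sqrt (15 / 16) ^ n *
        (1 + (101 / 100 : ℝ) ^ n * qc c)) * V1 := by
  have hn' : (1:ℝ) ≤ (n:ℝ) := by exact_mod_cast hn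
  set R := cutRadius n δ with hRdef
  have hR : 0 < R := cutRadius_pos hδ
  set a : ℝ := 2 * c * (n:ℝ) with hadef
  have ha0 : 0 < a := by
    rw [hadef]
    nlinarith
  set s : ℝ := Real.sqrt (15 / 16) with hsdef
  have hs0 : 0 < s := Real.sqrt_pos.2 (by norm_num)
  set r₁ : ℝ := R * s with hr₁def
  have hr₁ : 0 < r₁ := by positivity
  set κ : ℝ := R ^ 2 / r₁ with hκdef
  have hκ : 0 < κ := by positivity
  set Ψ : E → ℝ≥0∞ := fun z =>
    if r₁ < ‖z‖ then ENNReal.ofReal ((κ * ‖z‖) ^ (-a)) else ENNReal.ofReal ((R ^ 2) ^ (-a))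
    with hΨdef
  -- pointwise bound
  have hpt : ∀ x : E, phi n c δ x * phi n c δ (x + b) ≤ Ψ (x + (1/2 : ℝ) • b) := by
    intro x
    rw [phi_eq, phi_eq]
    by_cases h1 : R < ‖x‖
    · by_cases h2 : R < ‖x + b‖
      · rw [if_pos h1, if_pos h2, ← ENNReal.ofReal_mul (by positivity),
          ← Real.mul_rpow (norm_nonneg _) (norm_nonneg _)]
        obtain ⟨key1, key2⟩ := key_geom hR h1 h2 hb (norm_par x b)
        rw [hΨdef]
        simp only
        split
        · rename_i hz
          exact ENNReal.ofReal_le_ofReal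
            (Real.rpow_le_rpow_of_nonpos (mul_pos hκ (hr₁.trans hz)) (key2 hz) (by linarith))
        · exact ENNReal.ofReal_le_ofReal
            (Real.rpow_le_rpow_of_nonpos (by positivity) key1 (by linarith))
      · rw [if_neg h2, mul_zero]
        exact zero_le
    · rw [if_neg h1, zero_mul]
      exact zero_le
  calc ∫⁻ x : E, phi n c δ x * phi n c δ (x + b)
      ≤ ∫⁻ x : E, Ψ (x + (1/2 : ℝ) • b) := lintegral_mono hpt
    _ = ∫⁻ z : E, Ψ z := lintegral_add_right_eq_self Ψ _
    _ ≤ ENNReal.ofReal (R ^ ((n:ℝ) - 4 * c * n) * s ^ n *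
          (1 + (101 / 100 : ℝ) ^ n * qc c)) * V1 := ?_
  -- split Ψ
  have hsplit : ∀ z : E, Ψ z ≤
      (if r₁ < ‖z‖ then ENNReal.ofReal ((κ * ‖z‖) ^ (-a)) else 0) +
        (closedBall (0 : E) r₁).indicator (fun _ => ENNReal.ofReal ((R ^ 2) ^ (-a))) z := by
    intro z
    rw [hΨdef]
    simp only
    by_cases hz : r₁ < ‖z‖
    · rw [if_pos hz, if_pos hz]
      exact le_self_add
    · rw [if_neg hz, if_neg hz]
      have hmem : z ∈ closedBall (0 : E) r₁ := by
        simp only [mem_closedBall, dist_zero_right]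
        linarith [not_lt.1 hz]
      rw [Set.indicator_of_mem hmem]
      exact le_add_self
  have hmeas1 : Measurable fun z : E =>
      (if r₁ < ‖z‖ then ENNReal.ofReal ((κ * ‖z‖) ^ (-a)) else 0) := by
    apply Measurable.ite
    · exact (isOpen_lt continuous_const continuous_norm).measurableSet
    · fun_prop
    · fun_prop
  calc ∫⁻ z : E, Ψ z
      ≤ ∫⁻ z : E, ((if r₁ < ‖z‖ then ENNReal.ofReal ((κ * ‖z‖) ^ (-a)) else 0) +
          (closedBall (0 : E) r₁).indicator (fun _ => ENNReal.ofReal ((R ^ 2) ^ (-a))) z) :=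
        lintegral_mono hsplit
    _ = (∫⁻ z : E, (if r₁ < ‖z‖ then ENNReal.ofReal ((κ * ‖z‖) ^ (-a)) else 0)) +
        ∫⁻ z : E, (closedBall (0 : E) r₁).indicator
          (fun _ => ENNReal.ofReal ((R ^ 2) ^ (-a))) z := lintegral_add_left hmeas1 _
    _ ≤ ENNReal.ofReal (R ^ ((n:ℝ) - 4 * c * n) * s ^ n *
          (1 + (101 / 100 : ℝ) ^ n * qc c)) * V1 := ?_
  -- first piece
  have hfirst : (∫⁻ z : E, (if r₁ < ‖z‖ then ENNReal.ofReal ((κ * ‖z‖) ^ (-a)) else 0)) ≤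
      ENNReal.ofReal (R ^ ((n:ℝ) - 4 * c * n) * s ^ n * ((101 / 100 : ℝ) ^ n * qc c)) * V1 := by
    have hrw : (fun z : E => (if r₁ < ‖z‖ then ENNReal.ofReal ((κ * ‖z‖) ^ (-a)) else 0)) =
        fun z : E => ENNReal.ofReal (κ ^ (-a)) *
          (if r₁ < ‖z‖ then ENNReal.ofReal (‖z‖ ^ (-a)) else 0) := by
      funext z
      rw [Real.mul_rpow hκ.le (norm_nonneg _), ENNReal.ofReal_mul (by positivity), mul_ite, mul_zero]
    rw [hrw, lintegral_const_mul' _ _ ENNReal.ofReal_ne_top]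
    calc ENNReal.ofReal (κ ^ (-a)) *
          ∫⁻ z : E, (if r₁ < ‖z‖ then ENNReal.ofReal (‖z‖ ^ (-a)) else 0)
        ≤ ENNReal.ofReal (κ ^ (-a)) *
            (ENNReal.ofReal (r₁ ^ ((n : ℝ) - a) * (101 / 100 : ℝ) ^ n * qc c) * V1) :=
          mul_le_mul_right (master hn hc (by nlinarith) (by nlinarith) hr₁) _
      _ = ENNReal.ofReal (R ^ ((n:ℝ) - 4 * c * n) * s ^ n * ((101 / 100 : ℝ) ^ n * qc c)) * V1 := by
          rw [← mul_assoc, ← ENNReal.ofReal_mul (by positivity)]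
          congr 2
          -- κ ^ (-a) * r₁ ^ (n - a) = R ^ (n - 2a) * s ^ n
          have h2a : ((R:ℝ) ^ 2) ^ (-a) = R ^ (-(2*a)) := by
            rw [← Real.rpow_natCast R 2, ← Real.rpow_mul hR.le,
              show (2:ℕ) * (-a) = -(2*a) from by push_cast; ring]
          have e1 : κ ^ (-a) = R ^ (-(2*a)) * r₁ ^ a := by
            rw [hκdef, Real.div_rpow (by positivity) hr₁.le, div_eq_mul_inv,
              Real.rpow_neg hr₁.le a, inv_inv, h2a]
          have e2 : r₁ ^ a * r₁ ^ ((n:ℝ) - a) = r₁ ^ (n:ℝ) := by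
            rw [← Real.rpow_add hr₁]
            congr 1; ring
          have e3 : r₁ ^ (n:ℝ) = R ^ (n:ℝ) * s ^ n := by
            rw [hr₁def, Real.mul_rpow hR.le hs0.le]
            congr 1
            exact Real.rpow_natCast s n
          rw [show κ ^ (-a) * (r₁ ^ ((n : ℝ) - a) * (101 / 100 : ℝ) ^ n * qc c) =
              (κ ^ (-a) * r₁ ^ ((n:ℝ) - a)) * ((101 / 100 : ℝ) ^ n * qc c) by ring, e1,
            show R ^ (-(2*a)) * r₁ ^ a * r₁ ^ ((n:ℝ) - a) = R ^ (-(2*a)) * (r₁ ^ a * r₁ ^ ((n:ℝ) - a)) by ring,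
            e2, e3]
          have hmerge : R ^ (-(2 * a)) * R ^ (n:ℝ) = R ^ ((n:ℝ) - 4 * c * (n:ℝ)) := by
            rw [← Real.rpow_add hR]
            congr 1
            rw [hadef]
            ring
          linear_combination (s ^ n * ((101 / 100:ℝ) ^ n * qc c)) * hmerge
  -- second piece
  have hsecond : (∫⁻ z : E, (closedBall (0 : E) r₁).indicator
      (fun _ => ENNReal.ofReal ((R ^ 2) ^ (-a))) z) =
      ENNReal.ofReal (R ^ ((n:ℝ) - 4 * c * n) * s ^ n) * V1 := by
    rw [lintegral_indicator measurableSet_closedBall, setLIntegral_const,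
      Measure.addHaar_closedBall volume 0 hr₁.le]
    rw [finrank_euclideanSpace_fin, ← mul_assoc,
      ← ENNReal.ofReal_mul (Real.rpow_nonneg (by positivity) _)]
    congr 2
    have e4 : (R ^ 2 : ℝ) ^ (-a) = R ^ (-(2*a)) := by
      rw [← Real.rpow_natCast R 2, ← Real.rpow_mul hR.le,
        show (2:ℕ) * (-a) = -(2*a) from by push_cast; ring]
    have hmerge : R ^ (-(2 * a)) * R ^ (n:ℝ) = R ^ ((n:ℝ) - 4 * c * (n:ℝ)) := by
      rw [← Real.rpow_add hR]
      congr 1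
      rw [hadef]
      ring
    rw [e4, hr₁def, mul_pow, ← Real.rpow_natCast R n]
    linear_combination (s ^ n) * hmerge
  calc (∫⁻ z : E, (if r₁ < ‖z‖ then ENNReal.ofReal ((κ * ‖z‖) ^ (-a)) else 0)) +
        ∫⁻ z : E, (closedBall (0 : E) r₁).indicator
          (fun _ => ENNReal.ofReal ((R ^ 2) ^ (-a))) z
      ≤ ENNReal.ofReal (R ^ ((n:ℝ) - 4 * c * n) * s ^ n * ((101 / 100 : ℝ) ^ n * qc c)) * V1 +
        ENNReal.ofReal (R ^ ((n:ℝ) - 4 * c * n) * s ^ n) * V1 := by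
        rw [hsecond]
        exact add_le_add_left hfirst _
    _ = ENNReal.ofReal (R ^ ((n:ℝ) - 4 * c * n) * s ^ n *
          (1 + (101 / 100 : ℝ) ^ n * qc c)) * V1 := by
        have hqc := (qc_pos hc).le
        have hnn1 : 0 ≤ R ^ ((n:ℝ) - 4 * c * ↑n) * s ^ n * ((101/100:ℝ) ^ n * qc c) :=
          mul_nonneg (mul_nonneg (Real.rpow_nonneg hR.le _) (by positivity))
            (mul_nonneg (by positivity) hqc)
        have hnn2 : 0 ≤ R ^ ((n:ℝ) - 4 * c * ↑n) * s ^ n :=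
          mul_nonneg (Real.rpow_nonneg hR.le _) (by positivity)
        rw [← add_mul, ← ENNReal.ofReal_add hnn1 hnn2]
        congr 2
        ring

lemma w_bound {c : ℝ} (hc : 1 / 2 < c) (n : ℕ) :
    Real.sqrt (15 / 16) ^ n * (1 + (101 / 100 : ℝ) ^ n * qc c) * ((101 / 100 : ℝ) ^ n * qc c) +
        (1 / 2 : ℝ) ^ n * ((101 / 100 : ℝ) ^ n * qc c) ≤
      qc c * (2 + qc c) * (99 / 100 : ℝ) ^ n := by
  have hs : Real.sqrt (15 / 16) ≤ 97 / 100 := by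
    calc Real.sqrt (15 / 16) ≤ Real.sqrt ((97 / 100) ^ 2) := Real.sqrt_le_sqrt (by norm_num)
      _ = 97 / 100 := Real.sqrt_sq (by norm_num)
  have hs0 : 0 ≤ Real.sqrt (15 / 16) := Real.sqrt_nonneg _
  have hqc : 0 ≤ qc c := (qc_pos hc).le
  have h1 : Real.sqrt (15 / 16) ^ n * (101 / 100 : ℝ) ^ n ≤ (99 / 100 : ℝ) ^ n := by
    rw [← mul_pow]
    exact pow_le_pow_left₀ (by positivity) (by nlinarith) n
  have h2 : Real.sqrt (15 / 16) ^ n * ((101 / 100 : ℝ) ^ n * (101 / 100 : ℝ) ^ n) ≤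
      (99 / 100 : ℝ) ^ n := by
    rw [← mul_pow, ← mul_pow]
    exact pow_le_pow_left₀ (by positivity) (by nlinarith) n
  have h3 : (1 / 2 : ℝ) ^ n * (101 / 100 : ℝ) ^ n ≤ (99 / 100 : ℝ) ^ n := by
    rw [← mul_pow]
    exact pow_le_pow_left₀ (by positivity) (by norm_num) n
  calc Real.sqrt (15 / 16) ^ n * (1 + (101 / 100 : ℝ) ^ n * qc c) * ((101 / 100 : ℝ) ^ n * qc c) +
        (1 / 2 : ℝ) ^ n * ((101 / 100 : ℝ) ^ n * qc c)
      = (Real.sqrt (15 / 16) ^ n * (101 / 100 : ℝ) ^ n) * qc c +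
        (Real.sqrt (15 / 16) ^ n * ((101 / 100 : ℝ) ^ n * (101 / 100 : ℝ) ^ n)) * (qc c * qc c) +
        ((1 / 2 : ℝ) ^ n * (101 / 100 : ℝ) ^ n) * qc c := by ring
    _ ≤ (99 / 100 : ℝ) ^ n * qc c + (99 / 100 : ℝ) ^ n * (qc c * qc c) +
        (99 / 100 : ℝ) ^ n * qc c := by
        gcongr <;> positivity
    _ = qc c * (2 + qc c) * (99 / 100 : ℝ) ^ n := by ring

lemma main_bound (hn : 1 ≤ n) {c δ : ℝ} (hc : 1 / 2 < c) (hδ : 0 < δ)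
    {ℓ ℓ₁ ℓ₂ ℓ₃ : ℕ} (hℓ : 3 ≤ ℓ) (h₁ : 0 < ℓ₁) (h₂ : 0 < ℓ₂) (h₃ : 0 < ℓ₃)
    (hsum : ℓ₁ + ℓ₂ + ℓ₃ = ℓ) (y : ℕ → E) (ε : ℕ → ℝ) (hε : ∀ i, ε i = 1 ∨ ε i = -1) :
    ∫⁻ x₁ : E, ∫⁻ x₂ : E, ENNReal.ofReal
        (truncPower n c δ x₁ *
          (∏ i ∈ Finset.Ico 1 ℓ₁, truncPower n c δ (ε i • x₁ + y i)) *
        truncPower n c δ x₂ *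
          (∏ i ∈ Finset.Ico ℓ₁ (ℓ₁ + ℓ₂ - 1), truncPower n c δ (ε i • x₂ + y i)) *
        (∏ i ∈ Finset.Ico (ℓ₁ + ℓ₂ - 1) (ℓ - 1),
          truncPower n c δ (ε i • (x₁ + x₂) + y i))) ≤
      ENNReal.ofReal (cutRadius n δ ^ (((2:ℝ) - 2 * c * ℓ) * n) *
        (qc c * (2 + qc c)) * (99 / 100 : ℝ) ^ n) * V1 ^ 2 := by
  classical
  have hn' : (1:ℝ) ≤ (n:ℝ) := by exact_mod_cast hn
  have hc0 : (0:ℝ) < c := by linarith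
  set R := cutRadius n δ with hRdef
  have hR : 0 < R := cutRadius_pos hδ
  set a : ℝ := 2 * c * (n:ℝ) with hadef
  have ha0 : 0 < a := by rw [hadef]; nlinarith
  set S : ℝ≥0∞ := ENNReal.ofReal (R ^ (-a)) with hSdef
  set j : ℕ := ℓ₁ + ℓ₂ - 1 with hjdef
  have hj : j ∈ Finset.Ico (ℓ₁ + ℓ₂ - 1) (ℓ - 1) := by
    rw [Finset.mem_Ico]
    omega
  set b : E → E := fun x₁ => x₁ + ε j • y j with hbdef
  have hphiS : ∀ z : E, phi n c δ z ≤ S := fun z => phi_le hδ hc0 z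
  have ht : ∀ z : E, 0 ≤ truncPower n c δ z := fun z => truncPower_nonneg n c δ z
  -- pointwise bound
  have hF : ∀ x₁ x₂ : E, ENNReal.ofReal
      (truncPower n c δ x₁ *
        (∏ i ∈ Finset.Ico 1 ℓ₁, truncPower n c δ (ε i • x₁ + y i)) *
      truncPower n c δ x₂ *
        (∏ i ∈ Finset.Ico ℓ₁ (ℓ₁ + ℓ₂ - 1), truncPower n c δ (ε i • x₂ + y i)) *
      (∏ i ∈ Finset.Ico (ℓ₁ + ℓ₂ - 1) (ℓ - 1),
        truncPower n c δ (ε i • (x₁ + x₂) + y i))) ≤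
      S ^ (ℓ - 3) * (phi n c δ x₁ * (phi n c δ x₂ * phi n c δ (x₂ + b x₁))) := by
    intro x₁ x₂
    have hP1 : 0 ≤ ∏ i ∈ Finset.Ico 1 ℓ₁, truncPower n c δ (ε i • x₁ + y i) :=
      Finset.prod_nonneg fun i _ => ht _
    have hP2 : 0 ≤ ∏ i ∈ Finset.Ico ℓ₁ (ℓ₁ + ℓ₂ - 1), truncPower n c δ (ε i • x₂ + y i) :=
      Finset.prod_nonneg fun i _ => ht _
    have hsq : ε j * ε j = 1 := by rcases hε j with h | h <;> rw [h] <;> norm_num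
    have hvec : ε j • (x₁ + x₂) + y j = ε j • (x₂ + (x₁ + ε j • y j)) := by
      rw [smul_add, smul_add, smul_add, smul_smul, hsq, one_smul]
      abel
    have hεnorm : ‖ε j‖ = 1 := by rcases hε j with h | h <;> simp [h]
    have hnorm : ‖ε j • (x₁ + x₂) + y j‖ = ‖x₂ + b x₁‖ := by
      rw [hvec, norm_smul, hεnorm, one_mul, hbdef]
    have hkept : ENNReal.ofReal (truncPower n c δ (ε j • (x₁ + x₂) + y j)) =
        phi n c δ (x₂ + b x₁) :=
      congrArg ENNReal.ofReal (truncPower_congr c δ hnorm)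
    rw [ENNReal.ofReal_mul (by exact mul_nonneg (mul_nonneg (mul_nonneg (ht _) hP1) (ht _)) hP2),
      ENNReal.ofReal_mul (by exact mul_nonneg (mul_nonneg (ht _) hP1) (ht _)),
      ENNReal.ofReal_mul (by exact mul_nonneg (ht _) hP1),
      ENNReal.ofReal_mul (ht _),
      ENNReal.ofReal_prod_of_nonneg (fun i _ => ht _),
      ENNReal.ofReal_prod_of_nonneg (fun i _ => ht _),
      ENNReal.ofReal_prod_of_nonneg (fun i _ => ht _)]
    rw [← Finset.mul_prod_erase _ _ hj, hkept]
    have hQ1 : (∏ i ∈ Finset.Ico 1 ℓ₁, ENNReal.ofReal (truncPower n c δ (ε i • x₁ + y i))) ≤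
        S ^ (ℓ₁ - 1) := by
      calc ∏ i ∈ Finset.Ico 1 ℓ₁, ENNReal.ofReal (truncPower n c δ (ε i • x₁ + y i))
          ≤ ∏ _i ∈ Finset.Ico 1 ℓ₁, S := Finset.prod_le_prod' fun i _ => hphiS _
        _ = S ^ (ℓ₁ - 1) := by rw [Finset.prod_const, Nat.card_Ico]
    have hQ2 : (∏ i ∈ Finset.Ico ℓ₁ (ℓ₁ + ℓ₂ - 1),
        ENNReal.ofReal (truncPower n c δ (ε i • x₂ + y i))) ≤ S ^ (ℓ₁ + ℓ₂ - 1 - ℓ₁) := by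
      calc ∏ i ∈ Finset.Ico ℓ₁ (ℓ₁ + ℓ₂ - 1), ENNReal.ofReal (truncPower n c δ (ε i • x₂ + y i))
          ≤ ∏ _i ∈ Finset.Ico ℓ₁ (ℓ₁ + ℓ₂ - 1), S := Finset.prod_le_prod' fun i _ => hphiS _
        _ = S ^ (ℓ₁ + ℓ₂ - 1 - ℓ₁) := by rw [Finset.prod_const, Nat.card_Ico]
    have hQ3 : (∏ i ∈ (Finset.Ico (ℓ₁ + ℓ₂ - 1) (ℓ - 1)).erase j,
        ENNReal.ofReal (truncPower n c δ (ε i • (x₁ + x₂) + y i))) ≤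
        S ^ (ℓ - 1 - (ℓ₁ + ℓ₂ - 1) - 1) := by
      calc ∏ i ∈ (Finset.Ico (ℓ₁ + ℓ₂ - 1) (ℓ - 1)).erase j,
            ENNReal.ofReal (truncPower n c δ (ε i • (x₁ + x₂) + y i))
          ≤ ∏ _i ∈ (Finset.Ico (ℓ₁ + ℓ₂ - 1) (ℓ - 1)).erase j, S :=
            Finset.prod_le_prod' fun i _ => hphiS _
        _ = S ^ (ℓ - 1 - (ℓ₁ + ℓ₂ - 1) - 1) := by
            rw [Finset.prod_const, Finset.card_erase_of_mem hj, Nat.card_Ico]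
    calc ENNReal.ofReal (truncPower n c δ x₁) *
          (∏ i ∈ Finset.Ico 1 ℓ₁, ENNReal.ofReal (truncPower n c δ (ε i • x₁ + y i))) *
        ENNReal.ofReal (truncPower n c δ x₂) *
          (∏ i ∈ Finset.Ico ℓ₁ (ℓ₁ + ℓ₂ - 1), ENNReal.ofReal (truncPower n c δ (ε i • x₂ + y i))) *
        (phi n c δ (x₂ + b x₁) * ∏ i ∈ (Finset.Ico (ℓ₁ + ℓ₂ - 1) (ℓ - 1)).erase j,
          ENNReal.ofReal (truncPower n c δ (ε i • (x₁ + x₂) + y i)))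
        ≤ phi n c δ x₁ * S ^ (ℓ₁ - 1) * phi n c δ x₂ * S ^ (ℓ₁ + ℓ₂ - 1 - ℓ₁) *
          (phi n c δ (x₂ + b x₁) * S ^ (ℓ - 1 - (ℓ₁ + ℓ₂ - 1) - 1)) := by
          exact mul_le_mul' (mul_le_mul' (mul_le_mul' (mul_le_mul' le_rfl hQ1) le_rfl) hQ2)
            (mul_le_mul' le_rfl hQ3)
      _ = S ^ ((ℓ₁ - 1) + (ℓ₁ + ℓ₂ - 1 - ℓ₁) + (ℓ - 1 - (ℓ₁ + ℓ₂ - 1) - 1)) *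
          (phi n c δ x₁ * (phi n c δ x₂ * phi n c δ (x₂ + b x₁))) := by
          rw [pow_add, pow_add]; ring
      _ = S ^ (ℓ - 3) * (phi n c δ x₁ * (phi n c δ x₂ * phi n c δ (x₂ + b x₁))) := by
          congr 2
          omega

  -- inner integral bound
  set G1 : ℝ≥0∞ := ENNReal.ofReal (R ^ ((n:ℝ) - 4 * c * n) * Real.sqrt (15 / 16) ^ n *
    (1 + (101 / 100 : ℝ) ^ n * qc c)) * V1 with hG1def
  set G2 : ℝ≥0∞ := ENNReal.ofReal (R ^ ((n:ℝ) - 4 * c * n) * (101 / 100 : ℝ) ^ n * qc c) * V1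
    with hG2def
  have hInner : ∀ x₁ : E, (∫⁻ x₂ : E, ENNReal.ofReal
      (truncPower n c δ x₁ *
        (∏ i ∈ Finset.Ico 1 ℓ₁, truncPower n c δ (ε i • x₁ + y i)) *
      truncPower n c δ x₂ *
        (∏ i ∈ Finset.Ico ℓ₁ (ℓ₁ + ℓ₂ - 1), truncPower n c δ (ε i • x₂ + y i)) *
      (∏ i ∈ Finset.Ico (ℓ₁ + ℓ₂ - 1) (ℓ - 1),
        truncPower n c δ (ε i • (x₁ + x₂) + y i)))) ≤
      S ^ (ℓ - 3) * (G1 * phi n c δ x₁ +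
        (G2 * S) * (closedBall (-(ε j • y j)) (R / 2)).indicator (fun _ => (1:ℝ≥0∞)) x₁) := by
    intro x₁
    have htop : S ^ (ℓ - 3) * phi n c δ x₁ ≠ ⊤ :=
      ENNReal.mul_ne_top (ENNReal.pow_ne_top ENNReal.ofReal_ne_top) ENNReal.ofReal_ne_top
    calc (∫⁻ x₂ : E, ENNReal.ofReal
          (truncPower n c δ x₁ *
            (∏ i ∈ Finset.Ico 1 ℓ₁, truncPower n c δ (ε i • x₁ + y i)) *
          truncPower n c δ x₂ *
            (∏ i ∈ Finset.Ico ℓ₁ (ℓ₁ + ℓ₂ - 1), truncPower n c δ (ε i • x₂ + y i)) *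
          (∏ i ∈ Finset.Ico (ℓ₁ + ℓ₂ - 1) (ℓ - 1),
            truncPower n c δ (ε i • (x₁ + x₂) + y i))))
        ≤ ∫⁻ x₂ : E, S ^ (ℓ - 3) * (phi n c δ x₁ * (phi n c δ x₂ * phi n c δ (x₂ + b x₁))) :=
          lintegral_mono fun x₂ => hF x₁ x₂
      _ = (S ^ (ℓ - 3) * phi n c δ x₁) *
            ∫⁻ x₂ : E, phi n c δ x₂ * phi n c δ (x₂ + b x₁) := by
          rw [← lintegral_const_mul' _ _ htop]
          exact lintegral_congr fun x₂ => by ring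
      _ ≤ S ^ (ℓ - 3) * (G1 * phi n c δ x₁ +
            (G2 * S) * (closedBall (-(ε j • y j)) (R / 2)).indicator (fun _ => (1:ℝ≥0∞)) x₁) := ?_
    by_cases hcase : R / 2 ≤ ‖b x₁‖
    · calc (S ^ (ℓ - 3) * phi n c δ x₁) * ∫⁻ x₂ : E, phi n c δ x₂ * phi n c δ (x₂ + b x₁)
          ≤ (S ^ (ℓ - 3) * phi n c δ x₁) * G1 :=
            mul_le_mul_right (pair_good hn hc hδ hcase) _
        _ = S ^ (ℓ - 3) * (G1 * phi n c δ x₁) := by ring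
        _ ≤ S ^ (ℓ - 3) * (G1 * phi n c δ x₁ +
            (G2 * S) * (closedBall (-(ε j • y j)) (R / 2)).indicator (fun _ => (1:ℝ≥0∞)) x₁) :=
            mul_le_mul_right le_self_add _
    · push_neg at hcase
      have hmem : x₁ ∈ closedBall (-(ε j • y j)) (R / 2) := by
        rw [mem_closedBall, dist_eq_norm, sub_neg_eq_add]
        exact hcase.le
      calc (S ^ (ℓ - 3) * phi n c δ x₁) * ∫⁻ x₂ : E, phi n c δ x₂ * phi n c δ (x₂ + b x₁)
          ≤ (S ^ (ℓ - 3) * S) * G2 :=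
            mul_le_mul' (mul_le_mul_right (hphiS x₁) _) (pair_triv hn hc hδ (b x₁))
        _ = S ^ (ℓ - 3) *
            ((G2 * S) * (closedBall (-(ε j • y j)) (R / 2)).indicator (fun _ => (1:ℝ≥0∞)) x₁) := by
            rw [Set.indicator_of_mem hmem]
            ring
        _ ≤ S ^ (ℓ - 3) * (G1 * phi n c δ x₁ +
            (G2 * S) * (closedBall (-(ε j • y j)) (R / 2)).indicator (fun _ => (1:ℝ≥0∞)) x₁) :=
            mul_le_mul_right le_add_self _

  -- outer integral
  calc (∫⁻ x₁ : E, ∫⁻ x₂ : E, ENNReal.ofReal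
        (truncPower n c δ x₁ *
          (∏ i ∈ Finset.Ico 1 ℓ₁, truncPower n c δ (ε i • x₁ + y i)) *
        truncPower n c δ x₂ *
          (∏ i ∈ Finset.Ico ℓ₁ (ℓ₁ + ℓ₂ - 1), truncPower n c δ (ε i • x₂ + y i)) *
        (∏ i ∈ Finset.Ico (ℓ₁ + ℓ₂ - 1) (ℓ - 1),
          truncPower n c δ (ε i • (x₁ + x₂) + y i))))
      ≤ ∫⁻ x₁ : E, S ^ (ℓ - 3) * (G1 * phi n c δ x₁ +
          (G2 * S) * (closedBall (-(ε j • y j)) (R / 2)).indicator (fun _ => (1:ℝ≥0∞)) x₁) :=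
        lintegral_mono hInner
    _ = S ^ (ℓ - 3) * ((G1 * ∫⁻ x₁ : E, phi n c δ x₁) +
          (G2 * S) * (volume (closedBall (-(ε j • y j)) (R / 2)))) := by
        have hV1top : V1 ≠ ⊤ := measure_ball_lt_top.ne
        have hG1top : G1 ≠ ⊤ := ENNReal.mul_ne_top ENNReal.ofReal_ne_top hV1top
        have hG2top : G2 * S ≠ ⊤ :=
          ENNReal.mul_ne_top (ENNReal.mul_ne_top ENNReal.ofReal_ne_top hV1top)
            ENNReal.ofReal_ne_top
        rw [lintegral_const_mul' _ _ (ENNReal.pow_ne_top ENNReal.ofReal_ne_top)]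
        congr 1
        rw [lintegral_add_left ((measurable_phi c δ).const_mul G1)]
        congr 1
        · exact lintegral_const_mul' _ _ hG1top
        · rw [lintegral_const_mul' _ _ hG2top, lintegral_indicator measurableSet_closedBall,
            setLIntegral_const, one_mul]
    _ ≤ ENNReal.ofReal (R ^ (((2:ℝ) - 2 * c * ℓ) * n) *
        (qc c * (2 + qc c)) * (99 / 100 : ℝ) ^ n) * V1 ^ 2 := by
        have hqcnn : 0 ≤ qc c := (qc_pos hc).le
        have hRa : (0:ℝ) ≤ R ^ (-a) := Real.rpow_nonneg hR.le _
        have hA1 : (0:ℝ) ≤ R ^ ((n:ℝ) - 4 * c * n) * Real.sqrt (15 / 16) ^ n *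
            (1 + (101 / 100 : ℝ) ^ n * qc c) :=
          mul_nonneg (mul_nonneg (Real.rpow_nonneg hR.le _) (by positivity))
            (add_nonneg zero_le_one (mul_nonneg (by positivity) hqcnn))
        have hA2 : (0:ℝ) ≤ R ^ ((n:ℝ) - 2 * c * n) * (101 / 100 : ℝ) ^ n * qc c :=
          mul_nonneg (mul_nonneg (Real.rpow_nonneg hR.le _) (by positivity)) hqcnn
        have hA3 : (0:ℝ) ≤ R ^ ((n:ℝ) - 4 * c * n) * (101 / 100 : ℝ) ^ n * qc c :=
          mul_nonneg (mul_nonneg (Real.rpow_nonneg hR.le _) (by positivity)) hqcnn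
        have hY3 : (0:ℝ) ≤ (R / 2) ^ n := pow_nonneg (by linarith) n
        have hvolcb : volume (closedBall (-(ε j • y j)) (R / 2)) =
            ENNReal.ofReal ((R / 2) ^ n) * V1 := by
          rw [Measure.addHaar_closedBall volume _ (by linarith : (0:ℝ) ≤ R / 2),
            finrank_euclideanSpace_fin]
        calc S ^ (ℓ - 3) * ((G1 * ∫⁻ x₁ : E, phi n c δ x₁) +
              (G2 * S) * volume (closedBall (-(ε j • y j)) (R / 2)))
            ≤ S ^ (ℓ - 3) * ((G1 * (ENNReal.ofReal (R ^ ((n:ℝ) - 2 * c * n) *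
                (101 / 100 : ℝ) ^ n * qc c) * V1)) +
              (G2 * S) * (ENNReal.ofReal ((R / 2) ^ n) * V1)) := by
              rw [hvolcb]
              exact mul_le_mul_right (add_le_add_left
                (mul_le_mul_right (lintegral_phi hn hc hδ) G1) _) _
          _ = ENNReal.ofReal ((R ^ (-a)) ^ (ℓ - 3) *
              ((R ^ ((n:ℝ) - 4 * c * n) * Real.sqrt (15 / 16) ^ n *
                  (1 + (101 / 100 : ℝ) ^ n * qc c) *
                (R ^ ((n:ℝ) - 2 * c * n) * (101 / 100 : ℝ) ^ n * qc c)) +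
               (R ^ ((n:ℝ) - 4 * c * n) * (101 / 100 : ℝ) ^ n * qc c * R ^ (-a) *
                (R / 2) ^ n))) * V1 ^ 2 := by
              rw [hG1def, hG2def, hSdef,
                ENNReal.ofReal_mul (pow_nonneg hRa _),
                ENNReal.ofReal_pow hRa,
                ENNReal.ofReal_add (mul_nonneg hA1 hA2) (mul_nonneg (mul_nonneg hA3 hRa) hY3),
                ENNReal.ofReal_mul hA1,
                ENNReal.ofReal_mul (mul_nonneg hA3 hRa),
                ENNReal.ofReal_mul hA3]
              ring
          _ ≤ ENNReal.ofReal (R ^ (((2:ℝ) - 2 * c * ℓ) * n) *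
              (qc c * (2 + qc c)) * (99 / 100 : ℝ) ^ n) * V1 ^ 2 := by
              apply mul_le_mul_left
              apply ENNReal.ofReal_le_ofReal
              have hP : (R ^ (-a)) ^ (ℓ - 3) = R ^ (-a * ((ℓ:ℝ) - 3)) := by
                rw [← Real.rpow_natCast (R ^ (-a)) (ℓ - 3), ← Real.rpow_mul hR.le]
                congr 1
                rw [Nat.cast_sub hℓ]
                push_cast
                ring
              have h1 : R ^ ((n:ℝ) - 4 * c * n) * Real.sqrt (15 / 16) ^ n *
                  (1 + (101 / 100 : ℝ) ^ n * qc c) *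
                  (R ^ ((n:ℝ) - 2 * c * n) * (101 / 100 : ℝ) ^ n * qc c) =
                  R ^ ((2:ℝ) * n - 6 * c * n) * (Real.sqrt (15 / 16) ^ n *
                    (1 + (101 / 100 : ℝ) ^ n * qc c) * ((101 / 100 : ℝ) ^ n * qc c)) := by
                rw [show (2:ℝ) * n - 6 * c * n = ((n:ℝ) - 4 * c * n) + ((n:ℝ) - 2 * c * n)
                  by ring, Real.rpow_add hR]
                ring
              have h2 : R ^ ((n:ℝ) - 4 * c * n) * (101 / 100 : ℝ) ^ n * qc c * R ^ (-a) *
                  (R / 2) ^ n =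
                  R ^ ((2:ℝ) * n - 6 * c * n) * ((1 / 2 : ℝ) ^ n *
                    ((101 / 100 : ℝ) ^ n * qc c)) := by
                rw [show ((R:ℝ) / 2) = R * (1 / 2) by ring, mul_pow, ← Real.rpow_natCast R n,
                  show (2:ℝ) * n - 6 * c * n = ((n:ℝ) - 4 * c * n) + (-a) + (n:ℝ)
                    from by rw [hadef]; ring,
                  Real.rpow_add hR, Real.rpow_add hR]
                ring
              rw [h1, h2, hP, ← mul_add, ← mul_assoc, ← Real.rpow_add hR,
                show -a * ((ℓ:ℝ) - 3) + ((2:ℝ) * n - 6 * c * n) = ((2:ℝ) - 2 * c * ℓ) * n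
                  from by rw [hadef]; ring]
              calc R ^ (((2:ℝ) - 2 * c * ℓ) * n) * (Real.sqrt (15 / 16) ^ n *
                    (1 + (101 / 100 : ℝ) ^ n * qc c) * ((101 / 100 : ℝ) ^ n * qc c) +
                    (1 / 2 : ℝ) ^ n * ((101 / 100 : ℝ) ^ n * qc c))
                  ≤ R ^ (((2:ℝ) - 2 * c * ℓ) * n) * (qc c * (2 + qc c) * (99 / 100 : ℝ) ^ n) :=
                    mul_le_mul_of_nonneg_left (w_bound hc n) (Real.rpow_nonneg hR.le _)
                _ = R ^ (((2:ℝ) - 2 * c * ℓ) * n) * (qc c * (2 + qc c)) * (99 / 100 : ℝ) ^ n := by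
                    ring


end Stmt11

open Stmt11

/-- for positive integers `ℓ_1 + ℓ_2 + ℓ_3 = ℓ ≥ 3`, the normalized shifted
double integral
`V_n^{-2ℓc} ∫∫ f(x₁) ∏_{i=1}^{ℓ₁-1} f(ε_i x₁ + y_i) · f(x₂) ∏_{i=ℓ₁}^{ℓ₁+ℓ₂-2} f(ε_i x₂ + y_i)
 · ∏_{i=ℓ₁+ℓ₂-1}^{ℓ-2} f(ε_i(x₁+x₂) + y_i)` is bounded by `C ρⁿ`, uniformly in the shifts
`y_i` and signs `ε_i`. -/
theorem shifted_three_fold_integral_bound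
    (c δ : ℝ) (hc : 1 / 2 < c) (hδ : 0 < δ)
    (ℓ ℓ₁ ℓ₂ ℓ₃ : ℕ) (hℓ : 3 ≤ ℓ)
    (h₁ : 0 < ℓ₁) (h₂ : 0 < ℓ₂) (h₃ : 0 < ℓ₃)
    (hsum : ℓ₁ + ℓ₂ + ℓ₃ = ℓ) :
    ∃ C ρ : ℝ, 0 < C ∧ ρ ∈ Set.Ioo (0 : ℝ) 1 ∧
      ∀ n : ℕ, 1 ≤ n →
      ∀ y : ℕ → EuclideanSpace ℝ (Fin n),
      ∀ ε : ℕ → ℝ, (∀ i, ε i = 1 ∨ ε i = -1) →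
        unitBallVol n ^ (-(2 * (ℓ : ℝ) * c)) *
          ∫ x₁ : EuclideanSpace ℝ (Fin n), ∫ x₂ : EuclideanSpace ℝ (Fin n),
            truncPower n c δ x₁ *
              (∏ i ∈ Finset.Ico 1 ℓ₁, truncPower n c δ (ε i • x₁ + y i)) *
            truncPower n c δ x₂ *
              (∏ i ∈ Finset.Ico ℓ₁ (ℓ₁ + ℓ₂ - 1), truncPower n c δ (ε i • x₂ + y i)) *
            (∏ i ∈ Finset.Ico (ℓ₁ + ℓ₂ - 1) (ℓ - 1),
              truncPower n c δ (ε i • (x₁ + x₂) + y i))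
        ≤ C * ρ ^ n := by
  classical
  have hqc : 0 < qc c := qc_pos hc
  refine ⟨δ ^ ((2:ℝ) - 2 * c * ℓ) * (qc c * (2 + qc c)), 99 / 100,
    mul_pos (Real.rpow_pos_of_pos hδ _) (mul_pos hqc (by linarith)), ⟨by norm_num, by norm_num⟩,
    ?_⟩
  intro n hn y ε hε
  set F : EuclideanSpace ℝ (Fin n) → EuclideanSpace ℝ (Fin n) → ℝ := fun x₁ x₂ =>
    truncPower n c δ x₁ *
      (∏ i ∈ Finset.Ico 1 ℓ₁, truncPower n c δ (ε i • x₁ + y i)) *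
    truncPower n c δ x₂ *
      (∏ i ∈ Finset.Ico ℓ₁ (ℓ₁ + ℓ₂ - 1), truncPower n c δ (ε i • x₂ + y i)) *
    (∏ i ∈ Finset.Ico (ℓ₁ + ℓ₂ - 1) (ℓ - 1),
      truncPower n c δ (ε i • (x₁ + x₂) + y i)) with hFdef
  have ht : ∀ z : EuclideanSpace ℝ (Fin n), 0 ≤ truncPower n c δ z := fun z => truncPower_nonneg n c δ z
  have hFnn : ∀ x₁ x₂ : EuclideanSpace ℝ (Fin n), 0 ≤ F x₁ x₂ := by
    intro x₁ x₂
    apply mul_nonneg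
    apply mul_nonneg
    apply mul_nonneg
    apply mul_nonneg
    · exact ht _
    · exact Finset.prod_nonneg fun i _ => ht _
    · exact ht _
    · exact Finset.prod_nonneg fun i _ => ht _
    · exact Finset.prod_nonneg fun i _ => ht _
  have hFmeas : Measurable (fun p : EuclideanSpace ℝ (Fin n) × EuclideanSpace ℝ (Fin n) => F p.1 p.2) := by
    apply Measurable.mul
    apply Measurable.mul
    apply Measurable.mul
    apply Measurable.mul
    · exact (measurable_truncPower n c δ).comp measurable_fst
    · exact Finset.measurable_prod _ fun i _ => (measurable_truncPower n c δ).comp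
        ((measurable_fst.const_smul (ε i)).add_const (y i))
    · exact (measurable_truncPower n c δ).comp measurable_snd
    · exact Finset.measurable_prod _ fun i _ => (measurable_truncPower n c δ).comp
        ((measurable_snd.const_smul (ε i)).add_const (y i))
    · exact Finset.measurable_prod _ fun i _ => (measurable_truncPower n c δ).comp
        (((measurable_fst.add measurable_snd).const_smul (ε i)).add_const (y i))
  set G : EuclideanSpace ℝ (Fin n) → ℝ≥0∞ := fun x₁ => ∫⁻ x₂ : EuclideanSpace ℝ (Fin n), ENNReal.ofReal (F x₁ x₂) with hGdef
  have hGmeas : Measurable G :=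
    Measurable.lintegral_prod_right' (f := fun p : EuclideanSpace ℝ (Fin n) × EuclideanSpace ℝ (Fin n) => ENNReal.ofReal (F p.1 p.2))
      hFmeas.ennreal_ofReal
  have hinner : ∀ x₁ : EuclideanSpace ℝ (Fin n), (∫ x₂ : EuclideanSpace ℝ (Fin n), F x₁ x₂) = (G x₁).toReal := by
    intro x₁
    rw [hGdef]
    exact integral_eq_lintegral_of_nonneg_ae (Filter.Eventually.of_forall (hFnn x₁))
      ((hFmeas.comp measurable_prodMk_left).aestronglyMeasurable)
  have houter : (∫ x₁ : EuclideanSpace ℝ (Fin n), ∫ x₂ : EuclideanSpace ℝ (Fin n), F x₁ x₂) =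
      (∫⁻ x₁ : EuclideanSpace ℝ (Fin n), ENNReal.ofReal ((G x₁).toReal)).toReal := by
    rw [← integral_eq_lintegral_of_nonneg_ae
      (Filter.Eventually.of_forall fun x₁ => ENNReal.toReal_nonneg)
      (ENNReal.measurable_toReal.comp hGmeas).aestronglyMeasurable]
    exact integral_congr_ae (Filter.Eventually.of_forall hinner)
  -- the main bound
  set vn : ℝ := unitBallVol n with hvndef
  have hvn : 0 < vn := unitBallVol_pos n
  have hR : 0 < cutRadius n δ := cutRadius_pos hδ
  have hD : (∫⁻ x₁ : EuclideanSpace ℝ (Fin n), G x₁) ≤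
      ENNReal.ofReal (cutRadius n δ ^ (((2:ℝ) - 2 * c * ℓ) * n) *
        (qc c * (2 + qc c)) * (99 / 100 : ℝ) ^ n) *
        (volume (Metric.ball (0 : EuclideanSpace ℝ (Fin n)) 1)) ^ 2 :=
    main_bound hn hc hδ hℓ h₁ h₂ h₃ hsum y ε hε
  have hDtop : ENNReal.ofReal (cutRadius n δ ^ (((2:ℝ) - 2 * c * ℓ) * n) *
      (qc c * (2 + qc c)) * (99 / 100 : ℝ) ^ n) *
      (volume (Metric.ball (0 : EuclideanSpace ℝ (Fin n)) 1)) ^ 2 ≠ ⊤ :=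
    ENNReal.mul_ne_top ENNReal.ofReal_ne_top (ENNReal.pow_ne_top measure_ball_lt_top.ne)
  have hZnn : 0 ≤ cutRadius n δ ^ (((2:ℝ) - 2 * c * ℓ) * n) *
      (qc c * (2 + qc c)) * (99 / 100 : ℝ) ^ n :=
    mul_nonneg (mul_nonneg (Real.rpow_nonneg hR.le _) (by positivity)) (by positivity)
  have hIb : (∫ x₁ : EuclideanSpace ℝ (Fin n), ∫ x₂ : EuclideanSpace ℝ (Fin n), F x₁ x₂) ≤
      cutRadius n δ ^ (((2:ℝ) - 2 * c * ℓ) * n) *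
        (qc c * (2 + qc c)) * (99 / 100 : ℝ) ^ n * vn ^ 2 := by
    rw [houter]
    have hle : (∫⁻ x₁ : EuclideanSpace ℝ (Fin n), ENNReal.ofReal ((G x₁).toReal)) ≤
        ENNReal.ofReal (cutRadius n δ ^ (((2:ℝ) - 2 * c * ℓ) * n) *
          (qc c * (2 + qc c)) * (99 / 100 : ℝ) ^ n) *
          (volume (Metric.ball (0 : EuclideanSpace ℝ (Fin n)) 1)) ^ 2 :=
      le_trans (lintegral_mono fun x₁ => ENNReal.ofReal_toReal_le) hD
    calc (∫⁻ x₁ : EuclideanSpace ℝ (Fin n), ENNReal.ofReal ((G x₁).toReal)).toReal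
        ≤ (ENNReal.ofReal (cutRadius n δ ^ (((2:ℝ) - 2 * c * ℓ) * n) *
            (qc c * (2 + qc c)) * (99 / 100 : ℝ) ^ n) *
            (volume (Metric.ball (0 : EuclideanSpace ℝ (Fin n)) 1)) ^ 2).toReal := ENNReal.toReal_mono hDtop hle
      _ = cutRadius n δ ^ (((2:ℝ) - 2 * c * ℓ) * n) *
            (qc c * (2 + qc c)) * (99 / 100 : ℝ) ^ n * vn ^ 2 := by
          rw [ENNReal.toReal_mul, ENNReal.toReal_pow, ENNReal.toReal_ofReal hZnn,
            volume_unitBall hn, ENNReal.toReal_ofReal hvn.le]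
  -- final algebra
  have hvnexp : 0 ≤ vn ^ (-(2 * (ℓ:ℝ) * c)) := Real.rpow_nonneg hvn.le _
  calc vn ^ (-(2 * (ℓ:ℝ) * c)) * (∫ x₁ : EuclideanSpace ℝ (Fin n), ∫ x₂ : EuclideanSpace ℝ (Fin n), F x₁ x₂)
      ≤ vn ^ (-(2 * (ℓ:ℝ) * c)) * (cutRadius n δ ^ (((2:ℝ) - 2 * c * ℓ) * n) *
          (qc c * (2 + qc c)) * (99 / 100 : ℝ) ^ n * vn ^ 2) :=
        mul_le_mul_of_nonneg_left hIb hvnexp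
    _ = δ ^ ((2:ℝ) - 2 * c * ℓ) * (qc c * (2 + qc c)) * (99 / 100 : ℝ) ^ n := by
        have hdv : 0 < δ / vn := div_pos hδ hvn
        have hn0 : (n:ℝ) ≠ 0 := by
          have : (1:ℝ) ≤ (n:ℝ) := by exact_mod_cast hn
          linarith
        have e1 : cutRadius n δ ^ (((2:ℝ) - 2 * c * ℓ) * n) =
            (δ / vn) ^ ((2:ℝ) - 2 * c * ℓ) := by
          rw [show cutRadius n δ = (δ / vn) ^ (1 / (n:ℝ)) from rfl, ← Real.rpow_mul hdv.le]
          congr 1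
          field_simp
        have e2 : vn ^ (-(2 * (ℓ:ℝ) * c)) * ((δ / vn) ^ ((2:ℝ) - 2 * c * ℓ) * vn ^ 2) =
            δ ^ ((2:ℝ) - 2 * c * ℓ) := by
          rw [Real.div_rpow hδ.le hvn.le, div_eq_mul_inv, ← Real.rpow_neg hvn.le,
            ← Real.rpow_natCast vn 2]
          rw [show vn ^ (-(2 * (ℓ:ℝ) * c)) * (δ ^ ((2:ℝ) - 2 * c * ℓ) *
              vn ^ (-((2:ℝ) - 2 * c * ℓ)) * vn ^ ((2:ℕ):ℝ)) =
            δ ^ ((2:ℝ) - 2 * c * ℓ) * (vn ^ (-(2 * (ℓ:ℝ) * c)) *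
              vn ^ (-((2:ℝ) - 2 * c * ℓ)) * vn ^ ((2:ℕ):ℝ)) from by ring,
            ← Real.rpow_add hvn, ← Real.rpow_add hvn,
            show -(2 * (ℓ:ℝ) * c) + -((2:ℝ) - 2 * c * ℓ) + ((2:ℕ):ℝ) = 0 from by
              push_cast; ring,
            Real.rpow_zero, mul_one]
        rw [e1, show vn ^ (-(2 * (ℓ:ℝ) * c)) * ((δ / vn) ^ ((2:ℝ) - 2 * c * ℓ) *
            (qc c * (2 + qc c)) * (99 / 100 : ℝ) ^ n * vn ^ 2) =
          (vn ^ (-(2 * (ℓ:ℝ) * c)) * ((δ / vn) ^ ((2:ℝ) - 2 * c * ℓ) * vn ^ 2)) *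
            (qc c * (2 + qc c)) * (99 / 100 : ℝ) ^ n from by ring, e2]
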